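/- For all partial multifunctions f : ⊆ (X₀,δ_{X₀}) ⇉ (Y₀,δ_{Y₀}) and g : ⊆ (X₁,δ_{X₁}) ⇉ (Y₁,δ_{Y₁}) on represented spaces, f ⊞ g is the supremum (least upper bound) of f and g with respect to strong Weihrauch reducibility ≤_sW: f ≤_sW f ⊞ g, g ≤_sW f ⊞ g, and for any partial multifunction h on represented spaces with f ≤_sW h and g ≤_sW h, one has f ⊞ g ≤_sW h. -/

import Mathlib

attribute [local instance] Classical.propDecidable

namespace StrongWeihrauch

noncomputable section

/-! ### Cantor space, monotone approximations, and the evaluation map -/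

/-- Cantor space `2^ω`; we identify subsets of `ω` with their characteristic functions. -/
abbrev Cantor : Type := ℕ → Bool

/-- The coded triple `⟨n,s,i⟩`. -/
def tpl (n s i : ℕ) : ℕ := Nat.pair n (Nat.pair s i)

/-- A monotone approximation (Definition 3.1): every element has the form `⟨n,s,i⟩` with
`i < 2`; for each `n` there is at most one pair `(s,i)` with `⟨n,s,i⟩ ∈ a`; and the stages `s`
are strictly increasing in `n`. -/
def MonotoneApprox (a : Cantor) : Prop :=
  (∀ k, a k = true → ∃ n s i, i < 2 ∧ k = tpl n s i) ∧
  (∀ n s t i j, a (tpl n s i) = true → a (tpl n t j) = true → s = t ∧ i = j) ∧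
  (∀ m n s t i j, a (tpl m s i) = true → a (tpl n t j) = true → m < n → s < t)

/-- A total monotone approximation: every `n` gets a value. -/
def TotalMonotoneApprox (a : Cantor) : Prop :=
  MonotoneApprox a ∧ ∀ n, ∃ s i, i < 2 ∧ a (tpl n s i) = true

/-- The value of the evaluation map `e` on a (total) monotone approximation:
`eVal a n = i` iff `⟨n,s,i⟩ ∈ a` for some `s`. -/
def eVal (a : Cantor) : Cantor := fun n => decide (∃ s, a (tpl n s 1) = true)

/-- The evaluation map `e : ⊆ 2^ω → 2^ω`, the partial function whose domain is the set of
total monotone approximations `a`, with `e(a)(n) = i` iff `⟨n,s,i⟩ ∈ a` for some `s`. -/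
def evalMA : Cantor →. Cantor := fun a => ⟨TotalMonotoneApprox a, fun _ => eVal a⟩

/-! ### Turing functionals -/

/-- The oracle information available at stage `s`: the first `s` bits of `p`. -/
def initSeg (p : Cantor) (s : ℕ) : List Bool := (List.range s).map p

/-- A `{0,1}`-valued Turing functional on Cantor space, presented by a computable monotone
finite-prefix approximation: `approx σ n = some b` means that the computation on input `n`
with oracle prefix `σ` has converged, with output `b`. -/
structure TuringFunctional where
  approx : List Bool → ℕ → Option Bool
  computable : Computable₂ approx
  mono : ∀ σ τ n b, σ <+: τ → approx σ n = some b → approx τ n = some b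

namespace TuringFunctional

/-- `Φ^p(n)[s]↓`. -/
def ConvAt (Φ : TuringFunctional) (p : Cantor) (n s : ℕ) : Prop :=
  (Φ.approx (initSeg p s) n).isSome = true

/-- `s` is least such that `Φ^p(n)[s]↓`. -/
def LeastStage (Φ : TuringFunctional) (p : Cantor) (n s : ℕ) : Prop :=
  Φ.ConvAt p n s ∧ ∀ t, t < s → ¬ Φ.ConvAt p n t

/-- Convention 2.1: if `Φ^p(n)[s]↓` then `Φ^p(m)[s]↓` for all `m < n`, and for each `s`
there is at most one `n` for which `s` is least with `Φ^p(n)[s]↓`. -/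
def Convention (Φ : TuringFunctional) : Prop :=
  (∀ (p : Cantor) (s n m : ℕ), m < n → Φ.ConvAt p n s → Φ.ConvAt p m s) ∧
  (∀ (p : Cantor) (s n n' : ℕ), Φ.LeastStage p n s → Φ.LeastStage p n' s → n = n')

/-- The partial function `⊆ 2^ω → 2^ω` computed by `Φ`; it is defined at `p` exactly when
`Φ(p)` is total, in which case its value is the map `n ↦ Φ^p(n)`. -/
def eval (Φ : TuringFunctional) : Cantor →. Cantor :=
  fun p => ⟨∀ n, ∃ s b, Φ.approx (initSeg p s) n = some b,
    fun h n => (h n).choose_spec.choose⟩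

end TuringFunctional

/-- `a_{Φ(p)}`: the set of all `⟨n,s,i⟩` where `s` is least such that `Φ^p(n)[s]↓ = i`. -/
def approxSeq (Φ : TuringFunctional) (p : Cantor) : Cantor := fun k =>
  decide (∃ n s b, k = tpl n s (Bool.toNat b) ∧ Φ.LeastStage p n s ∧
    Φ.approx (initSeg p s) n = some b)

/-- Turing reducibility `q ≤_T p` on Cantor space. -/
def TuringLe (q p : Cantor) : Prop := ∃ Φ : TuringFunctional, Φ.eval p = Part.some q

/-! ### Pairing on Cantor space -/

/-- The effective join `⟨p,q⟩` on Cantor space. -/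
def pairC (p q : Cantor) : Cantor := fun n => if n % 2 = 0 then p (n / 2) else q (n / 2)

def leftC (r : Cantor) : Cantor := fun n => r (2 * n)

def rightC (r : Cantor) : Cantor := fun n => r (2 * n + 1)

/-- The singleton `{i} ⊆ ω` as an element of Cantor space. -/
def natSet (i : ℕ) : Cantor := fun n => decide (n = i)

/-- `⟨i,p⟩`, i.e. `⟨{i},p⟩`. -/
def inC (i : ℕ) (p : Cantor) : Cantor := pairC (natSet i) p

lemma leftC_pairC (p q : Cantor) : leftC (pairC p q) = p := by
  funext n
  have h1 : 2 * n % 2 = 0 := by omega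
  have h2 : 2 * n / 2 = n := by omega
  simp [leftC, pairC, h1, h2]

lemma rightC_pairC (p q : Cantor) : rightC (pairC p q) = q := by
  funext n
  have h1 : (2 * n + 1) % 2 = 1 := by omega
  have h2 : (2 * n + 1) / 2 = n := by omega
  simp [rightC, pairC, h1, h2]

lemma tpl_inj {n s i n' s' i' : ℕ} (h : tpl n s i = tpl n' s' i') :
    n = n' ∧ s = s' ∧ i = i' := by
  unfold tpl at h
  rw [Nat.pair_eq_pair] at h
  rcases h with ⟨h1, h2⟩
  rw [Nat.pair_eq_pair] at h2
  exact ⟨h1, h2.1, h2.2⟩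

lemma toNat_lt_two (b : Bool) : b.toNat < 2 := by cases b <;> decide

/-- Encoding of `q ∈ 2^ω` as a total monotone approximation evaluating to `q`. -/
def maEncode (q : Cantor) : Cantor := fun k => decide (∃ n, k = tpl n n (q n).toNat)

lemma maEncode_mem {q : Cantor} {k : ℕ} :
    maEncode q k = true ↔ ∃ n, k = tpl n n (q n).toNat := by
  simp [maEncode]

lemma maEncode_total (q : Cantor) : TotalMonotoneApprox (maEncode q) := by
  refine ⟨⟨?_, ?_, ?_⟩, ?_⟩
  · intro k hk
    obtain ⟨n, rfl⟩ := maEncode_mem.mp hk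
    exact ⟨n, n, (q n).toNat, toNat_lt_two _, rfl⟩
  · intro n s t i j h1 h2
    obtain ⟨m, hm⟩ := maEncode_mem.mp h1
    obtain ⟨m', hm'⟩ := maEncode_mem.mp h2
    obtain ⟨e1, e2, e3⟩ := tpl_inj hm
    obtain ⟨f1, f2, f3⟩ := tpl_inj hm'
    have hmm' : m = m' := by omega
    refine ⟨by omega, by rw [e3, f3, hmm']⟩
  · intro m n s t i j h1 h2 hmn
    obtain ⟨u, hu⟩ := maEncode_mem.mp h1
    obtain ⟨v, hv⟩ := maEncode_mem.mp h2
    obtain ⟨e1, e2, _⟩ := tpl_inj hu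
    obtain ⟨f1, f2, _⟩ := tpl_inj hv
    omega
  · intro n
    exact ⟨n, (q n).toNat, toNat_lt_two _, maEncode_mem.mpr ⟨n, rfl⟩⟩

lemma eVal_maEncode (q : Cantor) : eVal (maEncode q) = q := by
  funext n
  have hiff : (∃ s, maEncode q (tpl n s 1) = true) ↔ q n = true := by
    constructor
    · rintro ⟨s, hs⟩
      obtain ⟨m, hm⟩ := maEncode_mem.mp hs
      obtain ⟨e1, e2, e3⟩ := tpl_inj hm
      subst e1
      cases hq : q n
      · rw [hq] at e3; simp at e3
      · rfl
    · intro hq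
      refine ⟨n, maEncode_mem.mpr ⟨n, ?_⟩⟩
      rw [hq]
      rfl
  cases hq : q n
  · have hne : ¬ (∃ s, maEncode q (tpl n s 1) = true) := by
      intro h
      have ht := hiff.mp h
      rw [ht] at hq
      exact Bool.noConfusion hq
    simp [eVal, hne]
  · simp [eVal, hiff.mpr hq]

/-- An explicit non-(monotone approximation). -/
def badMA : Cantor := fun k => decide (k = tpl 0 0 0 ∨ k = tpl 0 1 0)

lemma badMA_not : ¬ TotalMonotoneApprox badMA := by
  rintro ⟨⟨-, h2, -⟩, -⟩
  have ha : badMA (tpl 0 0 0) = true := by simp [badMA]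
  have hb : badMA (tpl 0 1 0) = true := by simp [badMA]
  have := (h2 0 0 1 0 0 ha hb).1
  omega

/-! ### Represented spaces -/

/-- A represented space: a set `X` together with a partial surjection `δ : ⊆ 2^ω → X`. -/
structure RepSp : Type 1 where
  X : Type
  δ : Cantor →. X
  surj : ∀ x : X, ∃ p, x ∈ δ p

namespace RepSp

/-- The product representation of `X₀ × X₁`: `δ(⟨p₀,p₁⟩) = (δ₀(p₀), δ₁(p₁))`. -/
def prod (A B : RepSp) : RepSp where
  X := A.X × B.X
  δ := fun r => (A.δ (leftC r)).bind fun x => (B.δ (rightC r)).map fun y => (x, y)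
  surj := by
    rintro ⟨x, y⟩
    obtain ⟨p, hp⟩ := A.surj x
    obtain ⟨q, hq⟩ := B.surj y
    refine ⟨pairC p q, ?_⟩
    simp only [leftC_pairC, rightC_pairC, Part.mem_bind_iff]
    exact ⟨x, hp, Part.mem_map _ hq⟩

/-- The disjoint-union representation of `X₀ ⊔ X₁`: `δ(⟨i,p⟩) = ⟨i, δᵢ(p)⟩`. -/
def sum (A B : RepSp) : RepSp where
  X := A.X ⊕ B.X
  δ := fun r =>
    if leftC r = natSet 0 then (A.δ (rightC r)).map Sum.inl
    else if leftC r = natSet 1 then (B.δ (rightC r)).map Sum.inr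
    else Part.none
  surj := by
    rintro (x | y)
    · obtain ⟨p, hp⟩ := A.surj x
      refine ⟨inC 0 p, ?_⟩
      have e1 : leftC (inC 0 p) = natSet 0 := leftC_pairC _ _
      have e2 : rightC (inC 0 p) = p := rightC_pairC _ _
      simp only [e1, e2, if_pos rfl]
      exact Part.mem_map _ hp
    · obtain ⟨p, hp⟩ := B.surj y
      refine ⟨inC 1 p, ?_⟩
      have e1 : leftC (inC 1 p) = natSet 1 := leftC_pairC _ _
      have e2 : rightC (inC 1 p) = p := rightC_pairC _ _
      have hne : natSet 1 ≠ natSet 0 := by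
        intro h
        have := congrFun h 0
        simp [natSet] at this
      simp only [e1, e2, hne, if_neg, if_pos rfl, ite_false, ite_true]
      exact Part.mem_map _ hp

/-- The completion `Ŷ = Y ∪ {∞_Y}` (with `∞_Y` rendered as `none`), represented by
`δ_Ŷ(p) = δ_Y(e(p))` if `p` is a total monotone approximation with `e(p) ∈ dom(δ_Y)`, and
`δ_Ŷ(p) = ∞_Y` otherwise. -/
def hat (A : RepSp) : RepSp where
  X := Option A.X
  δ := fun p => Part.some (((evalMA p).bind A.δ).toOption)
  surj := by
    intro y
    match y with
    | none =>
        refine ⟨badMA, ?_⟩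
        rw [Part.mem_some_iff]
        have hd : ¬ ((evalMA badMA).bind A.δ).Dom := by
          rintro ⟨h1, -⟩
          exact badMA_not h1
        rw [eq_comm, Part.toOption_eq_none_iff]
        exact hd
    | some x =>
        obtain ⟨p, hp⟩ := A.surj x
        refine ⟨maEncode p, ?_⟩
        rw [Part.mem_some_iff, eq_comm, Part.toOption_eq_some_iff]
        refine Part.mem_bind_iff.mpr ?_
        refine ⟨p, ?_, hp⟩
        exact ⟨maEncode_total p, eVal_maEncode p⟩

end RepSp

/-! ### Partial multifunctions and the Weihrauch reducibilities -/

/-- A partial multifunction `f : ⊆ X ⇉ Y` between represented spaces: `f.f x` is the set of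
solutions of the instance `x`, and the domain of `f` is the set of `x` with `f.f x ≠ ∅`. -/
structure MFn : Type 1 where
  A : RepSp
  B : RepSp
  f : A.X → Set B.X

namespace MFn

/-- The coproduct `f ⊔ g`. -/
def sqcup (f g : MFn) : MFn where
  A := f.A.sum g.A
  B := f.B.sum g.B
  f := Sum.elim (fun x => Sum.inl '' f.f x) (fun y => Sum.inr '' g.f y)

/-- The meet `f ⊓ g`, with `(f ⊓ g)(⟨x,y⟩) = ({0} × f(x)) ∪ ({1} × g(y))` for
`x ∈ dom f`, `y ∈ dom g`. -/
def sqcap (f g : MFn) : MFn where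
  A := f.A.prod g.A
  B := f.B.sum g.B
  f := fun xy =>
    if (f.f xy.1).Nonempty ∧ (g.f xy.2).Nonempty then
      (Sum.inl '' f.f xy.1) ∪ (Sum.inr '' g.f xy.2)
    else ∅

/-- The join `f ⊞ g : ⊆ X₀ ⊔ X₁ ⇉ Ŷ₀ × Ŷ₁`, with `(f ⊞ g)(⟨0,x⟩) = f(x) × Ŷ₁` and
`(f ⊞ g)(⟨1,x⟩) = Ŷ₀ × g(x)`. -/
def boxplus (f g : MFn) : MFn where
  A := f.A.sum g.A
  B := (f.B.hat).prod (g.B.hat)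
  f := Sum.elim
    (fun x => (Option.some '' f.f x) ×ˢ (Set.univ : Set (Option g.B.X)))
    (fun y => (Set.univ : Set (Option f.B.X)) ×ˢ (Option.some '' g.f y))

end MFn

/-- `F ⊢ f`: the partial function `F : ⊆ 2^ω → 2^ω` is a realizer of `f`, i.e.
`δ_Y F(p) ∈ f δ_X(p)` for every `p ∈ dom(f δ_X)`. -/
def Realizes (F : Cantor →. Cantor) (f : MFn) : Prop :=
  ∀ p x, x ∈ f.A.δ p → (f.f x).Nonempty →
    ∃ q ∈ F p, ∃ y ∈ f.B.δ q, y ∈ f.f x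

/-- Composition of partial functions on Cantor space: `pcomp F G = F ∘ G`. -/
def pcomp (F G : Cantor →. Cantor) : Cantor →. Cantor := fun p => (G p).bind F

/-- Strong Weihrauch reducibility: `f ≤_sW g` iff there are Turing functionals `Φ, Ψ` with
`Ψ G Φ ⊢ f` for every `G ⊢ g`. -/
def sWLe (f g : MFn) : Prop :=
  ∃ Φ Ψ : TuringFunctional, ∀ G : Cantor →. Cantor, Realizes G g →
    Realizes (pcomp Ψ.eval (pcomp G Φ.eval)) f

/-- Strong Weihrauch equivalence. -/
def sWEq (f g : MFn) : Prop := sWLe f g ∧ sWLe g f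

/-- Weihrauch reducibility: `f ≤_W g` iff there are Turing functionals `Φ, Ψ` with
`Ψ⟨id, G Φ⟩ ⊢ f` for every `G ⊢ g`. -/
def wLe (f g : MFn) : Prop :=
  ∃ Φ Ψ : TuringFunctional, ∀ G : Cantor →. Cantor, Realizes G g →
    Realizes (fun p => (pcomp G Φ.eval p).bind fun q => Ψ.eval (pairC p q)) f

/-- Weihrauch equivalence. -/
def wEq (f g : MFn) : Prop := wLe f g ∧ wLe g f

/-- Cantor space as a represented space, with the identity representation. -/
def CantorSp : RepSp where
  X := Cantor
  δ := fun p => Part.some p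
  surj := fun p => ⟨p, Part.mem_some_iff.mpr rfl⟩

/-- A partial multifunction on Cantor space, viewed as a multifunction on represented
spaces via the identity representation. -/
def ofCantor (F : Cantor → Set Cantor) : MFn := ⟨CantorSp, CantorSp, F⟩

/-! ### Further definitions used in the statements -/

/-- `c` is an index for the Turing functional `Ψ`. -/
def codesTF (c : Nat.Partrec.Code) (Ψ : TuringFunctional) : Prop :=
  ∀ (σ : List Bool) (n : ℕ),
    c.eval (Nat.pair (Encodable.encode σ) n) = Part.some (Encodable.encode (Ψ.approx σ n))

/-- The multifunction `h` of Lemma 4.4: `h(⟨0,p⟩)` consists of all pairs `⟨a,q⟩` where `a`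
is a total monotone approximation with `e(a) ∈ F(p)`, and `h(⟨1,p⟩)` of all pairs `⟨q,a⟩`
where `a` is a total monotone approximation with `e(a) ∈ G(p)`. -/
def hJoin (F G : Cantor → Set Cantor) : Cantor → Set Cantor := fun r =>
  {z | leftC r = natSet 0 ∧
    ∃ a q, z = pairC a q ∧ TotalMonotoneApprox a ∧ eVal a ∈ F (rightC r)} ∪
  {z | leftC r = natSet 1 ∧
    ∃ q a, z = pairC q a ∧ TotalMonotoneApprox a ∧ eVal a ∈ G (rightC r)}

/-- A single-valued partial function on Cantor space, viewed as a partial multifunction on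
represented spaces (via the identity representation). -/
def pfnToM (F : Cantor →. Cantor) : MFn := ofCantor fun p => {q | q ∈ F p}

/-- The single-point partial function `{p} → {q}`. -/
def singleFn (p q : Cantor) : MFn := ofCantor fun r => if r = p then {q} else ∅

/-- `A` is Medvedev reducible to `B`. -/
def MedvedevLe (A B : Set Cantor) : Prop :=
  ∃ Φ : TuringFunctional, ∀ p ∈ B, ∃ q ∈ Φ.eval p, q ∈ A

/-- The all-zero sequence `0^ω`. -/
def zeroSeq : Cantor := fun _ => false

/-- `d_A : A → {0^ω}`. -/
def dFn (A : Set Cantor) : MFn := ofCantor fun p => if p ∈ A then {zeroSeq} else ∅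

/-- `A ⊔ B ⊆ 2^ω`: all `⟨i,p⟩` with `i < 2` and `p ∈ A` if `i = 0`, `p ∈ B` if `i = 1`. -/
def setSum (A B : Set Cantor) : Set Cantor :=
  {r | ∃ p ∈ A, r = inC 0 p} ∪ {r | ∃ p ∈ B, r = inC 1 p}

/-- `A × B ⊆ 2^ω`: all pairs `⟨p,q⟩` with `p ∈ A` and `q ∈ B`. -/
def setProd (A B : Set Cantor) : Set Cantor := {r | ∃ p ∈ A, ∃ q ∈ B, r = pairC p q}

/-- `p` is a name of an instance of `f`. -/
def domName (f : MFn) (p : Cantor) : Prop := ∃ x ∈ f.A.δ p, (f.f x).Nonempty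

/-- `q` is a name of a solution to the instance of `f` named by `p`. -/
def solName (f : MFn) (p q : Cantor) : Prop :=
  ∃ x ∈ f.A.δ p, ∃ y ∈ f.B.δ q, y ∈ f.f x

/-- Strong computable reducibility `f ≤_sc g`: every name `p` of an instance of `f`
computes a name `p'` of an instance of `g` such that every name of a solution to the
latter computes a name of a solution to the former. -/
def scLe (f g : MFn) : Prop :=
  ∀ p, domName f p → ∃ p', TuringLe p' p ∧ domName g p' ∧
    ∀ q, solName g p' q → ∃ z, TuringLe z q ∧ solName f p z

/-- Strong computable equivalence. -/
def scEq (f g : MFn) : Prop := scLe f g ∧ scLe g f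

/-! ### Auxiliary development -/

section Aux

lemma decide_inst {p : Prop} (i1 i2 : Decidable p) : @decide p i1 = @decide p i2 := by
  congr 1

lemma initSeg_length (p : Cantor) (s : ℕ) : (initSeg p s).length = s := by
  simp [initSeg]

lemma initSeg_getD (p : Cantor) (s m : ℕ) :
    (initSeg p s).getD m false = if m < s then p m else false := by
  by_cases h : m < s
  · rw [if_pos h]
    rw [List.getD_eq_getElem?_getD]
    simp [initSeg, h]
  · rw [if_neg h]
    apply List.getD_eq_default
    simp [initSeg]; omega

lemma initSeg_prefix (p : Cantor) {s t : ℕ} (h : s ≤ t) :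
    initSeg p s <+: initSeg p t := by
  have : List.range s = (List.range t).take s := by
    rw [List.take_range]
    simp [Nat.min_eq_left h]
  unfold initSeg
  rw [this]
  exact (List.take_prefix _ _).map _

lemma initSeg_take (p : Cantor) {s t : ℕ} (h : s ≤ t) :
    (initSeg p t).take s = initSeg p s := by
  have hp := initSeg_prefix p h
  rw [List.prefix_iff_eq_take, initSeg_length] at hp
  exact hp.symm

lemma prefix_getD {σ τ : List Bool} (h : σ <+: τ) {m : ℕ} (hm : m < σ.length) :
    τ.getD m false = σ.getD m false := by
  obtain ⟨r, rfl⟩ := h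
  rw [List.getD_eq_getElem?_getD, List.getD_eq_getElem?_getD, List.getElem?_append, if_pos hm]

namespace TuringFunctional

lemma approx_agree (Φ : TuringFunctional) {p : Cantor} {s t n : ℕ} {b b' : Bool}
    (h1 : Φ.approx (initSeg p s) n = some b) (h2 : Φ.approx (initSeg p t) n = some b') :
    b = b' := by
  rcases le_total s t with h | h
  · have := Φ.mono _ _ _ _ (initSeg_prefix p h) h1
    rw [this] at h2; exact Option.some_inj.mp h2
  · have := Φ.mono _ _ _ _ (initSeg_prefix p h) h2
    rw [this] at h1; exact (Option.some_inj.mp h1).symm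

lemma mem_eval {Φ : TuringFunctional} {p q : Cantor} :
    q ∈ Φ.eval p ↔ ∀ n, ∃ s, Φ.approx (initSeg p s) n = some (q n) := by
  constructor
  · rintro ⟨hD, hv⟩ n
    refine ⟨(hD n).choose, ?_⟩
    have h1 : Φ.approx (initSeg p ((hD n).choose)) n = some ((hD n).choose_spec.choose) :=
      (hD n).choose_spec.choose_spec
    have hq : q n = (hD n).choose_spec.choose := by rw [← hv]; rfl
    rw [hq]; exact h1
  · intro h
    have hD : ∀ n, ∃ s b, Φ.approx (initSeg p s) n = some b := fun n =>
      ⟨(h n).choose, q n, (h n).choose_spec⟩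
    refine ⟨hD, ?_⟩
    funext n
    have h1 : Φ.approx (initSeg p ((hD n).choose)) n = some ((hD n).choose_spec.choose) :=
      (hD n).choose_spec.choose_spec
    exact (Φ.approx_agree h1 (h n).choose_spec)

lemma eval_eq_some {Φ : TuringFunctional} {p q : Cantor}
    (h : ∀ n, ∃ s, Φ.approx (initSeg p s) n = some (q n)) : Φ.eval p = Part.some q :=
  Part.eq_some_iff.mpr (mem_eval.mpr h)

end TuringFunctional

end Aux
section Aux2

open Computable in
/-- Bounded universal quantifier as a Bool. -/
def ballB (p : ℕ → Bool) : ℕ → Bool := fun s =>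
  Nat.rec (motive := fun _ => Bool) true (fun m ih => ih && p m) s

lemma ballB_iff {p : ℕ → Bool} {s : ℕ} : ballB p s = true ↔ ∀ m < s, p m = true := by
  induction s with
  | zero => simp [ballB]
  | succ s ih =>
      show (ballB p s && p s) = true ↔ _
      rw [Bool.and_eq_true, ih]
      constructor
      · rintro ⟨h1, h2⟩ m hm
        rcases Nat.lt_succ_iff_lt_or_eq.mp hm with h | rfl
        exacts [h1 m h, h2]
      · intro h
        exact ⟨fun m hm => h m (hm.trans (Nat.lt_succ_self s)), h s (Nat.lt_succ_self s)⟩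

lemma computable_ballB {α : Type} [Primcodable α] {p : α → ℕ → Bool} {f : α → ℕ}
    (hp : Computable₂ p) (hf : Computable f) : Computable fun a => ballB (p a) (f a) := by
  have := Computable.nat_rec (α := α) (σ := Bool) hf (Computable.const true)
    (Computable.cond (Computable.snd.comp Computable.snd)
      (hp.comp Computable.fst (Computable.fst.comp Computable.snd))
      (Computable.const false)).to₂
  refine this.of_eq fun a => ?_
  induction f a with
  | zero => rfl
  | succ m ih =>
      show (cond _ (p a m) false) = (ballB (p a) m && p a m)
      rw [ih]
      cases (ballB (p a) m) <;> simp

/-- Least `k < s` with `p k = true`. -/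
def findB (p : ℕ → Bool) : ℕ → Option ℕ := fun s =>
  Nat.rec (motive := fun _ => Option ℕ) none
    (fun m ih => Option.casesOn ih (cond (p m) (some m) none) some) s

lemma findB_cases (p : ℕ → Bool) (s : ℕ) :
    (findB p s = none ∧ ∀ j < s, p j = false) ∨
    (∃ k, findB p s = some k ∧ k < s ∧ p k = true ∧ ∀ j < k, p j = false) := by
  induction s with
  | zero => exact Or.inl ⟨rfl, by omega⟩
  | succ s ih =>
      have step : findB p (s+1) =
          Option.casesOn (findB p s) (cond (p s) (some s) none) some := rfl
      rcases ih with ⟨h1, h2⟩ | ⟨k, h1, h2, h3, h4⟩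
      · rw [step, h1]
        cases hp : p s
        · refine Or.inl ⟨rfl, fun j hj => ?_⟩
          rcases Nat.lt_succ_iff_lt_or_eq.mp hj with h | rfl
          exacts [h2 j h, hp]
        · exact Or.inr ⟨s, rfl, Nat.lt_succ_self s, hp, h2⟩
      · exact Or.inr ⟨k, by rw [step, h1], h2.trans (Nat.lt_succ_self s), h3, h4⟩

lemma findB_some_iff {p : ℕ → Bool} {s k : ℕ} :
    findB p s = some k ↔ k < s ∧ p k = true ∧ ∀ j < k, p j = false := by
  constructor
  · intro h
    rcases findB_cases p s with ⟨h1, _⟩ | ⟨k', h1, h2, h3, h4⟩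
    · rw [h1] at h; exact absurd h (by simp)
    · rw [h1] at h
      cases Option.some_inj.mp h
      exact ⟨h2, h3, h4⟩
  · rintro ⟨hk, hpk, hmin⟩
    rcases findB_cases p s with ⟨h1, h2⟩ | ⟨k', h1, h2, h3, h4⟩
    · rw [h2 k hk] at hpk; exact absurd hpk (by simp)
    · have : k' = k := by
        rcases lt_trichotomy k' k with h | h | h
        · rw [hmin k' h] at h3; exact absurd h3 (by simp)
        · exact h
        · rw [h4 k h] at hpk; exact absurd hpk (by simp)
      rw [h1, this]

lemma findB_none_iff {p : ℕ → Bool} {s : ℕ} :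
    findB p s = none ↔ ∀ j < s, p j = false := by
  rcases findB_cases p s with ⟨h1, h2⟩ | ⟨k, h1, h2, h3, h4⟩
  · simp only [h1]
    exact ⟨fun _ => h2, fun _ => trivial⟩
  · simp only [h1]
    constructor
    · intro h; exact absurd h (by simp)
    · intro h; rw [h k h2] at h3; exact absurd h3 (by simp)

lemma computable_findB {α : Type} [Primcodable α] {p : α → ℕ → Bool} {f : α → ℕ}
    (hp : Computable₂ p) (hf : Computable f) : Computable fun a => findB (p a) (f a) := by
  have hstep : Computable fun x : α × (ℕ × Option ℕ) =>
      (Option.casesOn x.2.2 (cond (p x.1 x.2.1) (some x.2.1) none) some : Option ℕ) := by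
    exact Computable.option_casesOn (Computable.snd.comp Computable.snd)
      (Computable.cond (hp.comp Computable.fst (Computable.fst.comp Computable.snd))
        (Computable.option_some.comp (Computable.fst.comp Computable.snd))
        (Computable.const none))
      (Computable.option_some.comp Computable.snd).to₂
  have := Computable.nat_rec (α := α) (σ := Option ℕ) hf (Computable.const none) hstep.to₂
  exact this.of_eq fun a => rfl

lemma ballB_congr {p q : ℕ → Bool} {s : ℕ} (h : ∀ m < s, p m = q m) :
    ballB p s = ballB q s := by
  induction s with
  | zero => rfl
  | succ s ih =>
      show (ballB p s && p s) = (ballB q s && q s)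
      rw [ih fun m hm => h m (hm.trans (Nat.lt_succ_self s)), h s (Nat.lt_succ_self s)]


attribute [irreducible] ballB

end Aux2
section Aux3

/-- Primrec-friendly `List.take`. -/
def takeL (σ : List Bool) (s : ℕ) : List Bool :=
  (List.range (min s σ.length)).map (fun i => σ.getD i false)

lemma takeL_eq (σ : List Bool) (s : ℕ) : takeL σ s = σ.take s := by
  apply List.ext_getElem
  · simp [takeL]
  · intro i h1 h2
    simp only [takeL, List.getElem_map, List.getElem_range, List.getElem_take]
    · simp only [takeL, List.length_map, List.length_range] at h1
      rw [List.getD_eq_getElem]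

lemma primrec_takeL : Primrec₂ takeL := by
  have hf : Primrec fun a : List Bool × ℕ => List.range (min a.2 a.1.length) :=
    Primrec.list_range.comp (Primrec.nat_min.comp Primrec.snd
      (Primrec.list_length.comp Primrec.fst))
  have hg : Primrec₂ fun (a : List Bool × ℕ) (i : ℕ) => a.1.getD i false :=
    ((Primrec.list_getD false).comp (Primrec.fst.comp Primrec.fst) Primrec.snd).to₂
  exact Primrec.list_map hf hg

/-- The odd-position part of a finite string. -/
def odds (σ : List Bool) : List Bool :=
  (List.range (σ.length / 2)).map (fun k => σ.getD (2*k+1) false)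

lemma primrec_odds : Primrec odds := by
  have hf : Primrec fun σ : List Bool => List.range (σ.length / 2) :=
    Primrec.list_range.comp (Primrec.nat_div.comp Primrec.list_length (Primrec.const 2))
  have hg : Primrec₂ fun (σ : List Bool) (k : ℕ) => σ.getD (2*k+1) false :=
    ((Primrec.list_getD false).comp Primrec.fst
      (Primrec.nat_add.comp (Primrec.nat_mul.comp (Primrec.const 2) Primrec.snd)
        (Primrec.const 1))).to₂
  exact Primrec.list_map hf hg

lemma odds_initSeg (p : Cantor) (s : ℕ) : odds (initSeg p s) = initSeg (rightC p) (s / 2) := by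
  unfold odds rightC
  have hl : (initSeg p s).length = s := initSeg_length p s
  rw [hl]
  show _ = List.map (fun n => p (2*n+1)) (List.range (s/2))
  rw [show List.map (fun n => p (2*n+1)) (List.range (s/2)) =
    List.map (fun n => p (2*n+1)) (List.range (s/2)) from rfl]
  apply List.map_congr_left
  intro k hk
  rw [List.mem_range] at hk
  have h2 : 2*k+1 < s := by omega
  have := initSeg_getD p s (2*k+1)
  rw [if_pos h2] at this
  exact this

lemma odds_prefix {σ τ : List Bool} (h : σ <+: τ) : odds σ <+: odds τ := by
  have hlen : σ.length ≤ τ.length := h.length_le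
  rw [List.prefix_iff_eq_take]
  have hl : (odds σ).length = σ.length / 2 := by simp [odds]
  rw [hl]
  unfold odds
  rw [← List.map_take, List.take_range, Nat.min_eq_left (by omega)]
  apply List.map_congr_left
  intro k hk
  rw [List.mem_range] at hk
  exact (prefix_getD h (by omega)).symm

lemma prefix_take_eq {σ τ : List Bool} (h : σ <+: τ) {s : ℕ} (hs : s ≤ σ.length) :
    τ.take s = σ.take s := by
  have := List.prefix_iff_eq_take.mp h
  rw [this, List.take_take, Nat.min_eq_left hs]

end Aux3
section Aux4

def beqN (a b : ℕ) : Bool := decide (a = b)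
def bleN (a b : ℕ) : Bool := decide (a ≤ b)
def bltN (a b : ℕ) : Bool := decide (a < b)
def obeq (x y : Option Bool) : Bool := decide (x = y)

lemma primrec_beqN : Primrec₂ beqN := Primrec.of_eq Primrec.eq.decide fun _ => decide_inst _ _
lemma primrec_bleN : Primrec₂ bleN := Primrec.of_eq Primrec.nat_le.decide fun _ => decide_inst _ _
lemma primrec_bltN : Primrec₂ bltN := Primrec.of_eq Primrec.nat_lt.decide fun _ => decide_inst _ _
lemma primrec_obeq : Primrec₂ obeq := Primrec.of_eq Primrec.eq.decide fun _ => decide_inst _ _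

@[simp] lemma beqN_iff {a b : ℕ} : beqN a b = true ↔ a = b := by simp [beqN]
@[simp] lemma bleN_iff {a b : ℕ} : bleN a b = true ↔ a ≤ b := by simp [bleN]
@[simp] lemma bltN_iff {a b : ℕ} : bltN a b = true ↔ a < b := by simp [bltN]
@[simp] lemma obeq_iff {x y : Option Bool} : obeq x y = true ↔ x = y := by simp [obeq]

lemma getD_true_lt {σ : List Bool} {m : ℕ} (h : σ.getD m false = true) : m < σ.length := by
  by_contra hc
  rw [List.getD_eq_default] at h
  · exact Bool.noConfusion h
  · omega

lemma prefix_get? {σ τ : List Bool} (h : σ <+: τ) {m : ℕ} {b : Bool}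
    (hm : σ[m]? = some b) : τ[m]? = some b := by
  obtain ⟨r, rfl⟩ := h
  have hlt : m < σ.length := by
    by_contra hc
    rw [List.getElem?_eq_none (by omega)] at hm
    cases hm
  rw [List.getElem?_append_left hlt]
  exact hm

lemma initSeg_get? {p : Cantor} {s m : ℕ} (h : m < s) :
    (initSeg p s)[m]? = some (p m) := by
  unfold initSeg
  rw [List.getElem?_map, List.getElem?_range h]
  rfl

/-! #### The machine `p ↦ ⟨{i}, p⟩` -/

def embApprox (i : ℕ) (σ : List Bool) (n : ℕ) : Option Bool :=
  bif beqN (n % 2) 0 then some (beqN (n / 2) i) else σ[n / 2]?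

def embF (i : ℕ) : TuringFunctional where
  approx := embApprox i
  computable := by
    have hc : Computable fun p : List Bool × ℕ => beqN (p.2 % 2) 0 :=
      (primrec_beqN.comp (Primrec.nat_mod.comp Primrec.snd (Primrec.const 2))
        (Primrec.const 0)).to_comp
    have hf : Computable fun p : List Bool × ℕ => (some (beqN (p.2 / 2) i) : Option Bool) :=
      (Primrec.option_some.comp (primrec_beqN.comp
        (Primrec.nat_div.comp Primrec.snd (Primrec.const 2)) (Primrec.const i))).to_comp
    have hg : Computable fun p : List Bool × ℕ => p.1[p.2 / 2]? :=
      Computable.list_getElem?.comp Computable.fst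
        ((Primrec.nat_div.comp Primrec.snd (Primrec.const 2)).to_comp)
    exact Computable.cond hc hf hg
  mono := by
    intro σ τ n b hpre hb
    unfold embApprox at *
    cases hc : beqN (n % 2) 0
    · rw [hc] at hb
      simp only [cond_false] at hb ⊢
      exact prefix_get? hpre hb
    · rw [hc] at hb
      exact hb

lemma embF_eval (i : ℕ) (p : Cantor) : (embF i).eval p = Part.some (inC i p) := by
  apply TuringFunctional.eval_eq_some
  intro n
  show ∃ s, embApprox i (initSeg p s) n = some (inC i p n)
  unfold embApprox inC pairC natSet
  by_cases h : n % 2 = 0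
  · refine ⟨0, ?_⟩
    rw [if_pos h]
    have : beqN (n % 2) 0 = true := beqN_iff.mpr h
    rw [this, cond_true]
    congr 1
  · refine ⟨n / 2 + 1, ?_⟩
    rw [if_neg h]
    have : beqN (n % 2) 0 = false := by
      cases hc : beqN (n % 2) 0
      · rfl
      · exact absurd (beqN_iff.mp hc) h
    rw [this, cond_false]
    exact initSeg_get? (Nat.lt_succ_self _)

/-! #### The machine reading off `eVal` of one side of a pair -/

def sideApprox (j : ℕ) (σ : List Bool) (n : ℕ) : Option Bool :=
  (findB (fun k => bif σ.getD (2*k+j) false then beqN k.unpair.1 n else false) σ.length).map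
    (fun k => beqN k.unpair.2.unpair.2 1)

lemma tpl_unpair (n s i : ℕ) :
    (tpl n s i).unpair.1 = n ∧ (tpl n s i).unpair.2.unpair.1 = s ∧
      (tpl n s i).unpair.2.unpair.2 = i := by
  simp [tpl, Nat.unpair_pair]

def sideF (j : ℕ) : TuringFunctional where
  approx := sideApprox j
  computable := by
    have hp : Computable₂ fun (a : List Bool × ℕ) (k : ℕ) =>
        (bif a.1.getD (2*k+j) false then beqN k.unpair.1 a.2 else false) := by
      have h1 : Computable fun x : (List Bool × ℕ) × ℕ => x.1.1.getD (2*x.2+j) false :=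
        ((Primrec.list_getD false).comp (Primrec.fst.comp Primrec.fst)
          (Primrec.nat_add.comp (Primrec.nat_mul.comp (Primrec.const 2) Primrec.snd)
            (Primrec.const j))).to_comp
      have h2 : Computable fun x : (List Bool × ℕ) × ℕ => beqN x.2.unpair.1 x.1.2 :=
        (primrec_beqN.comp (Primrec.fst.comp (Primrec.unpair.comp Primrec.snd))
          (Primrec.snd.comp Primrec.fst)).to_comp
      exact Computable.cond h1 h2 (Computable.const false)
    have hfind : Computable fun a : List Bool × ℕ =>
        findB (fun k => bif a.1.getD (2*k+j) false then beqN k.unpair.1 a.2 else false)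
          a.1.length :=
      computable_findB hp (Computable.list_length.comp Computable.fst)
    have hmap : Computable₂ fun (_ : List Bool × ℕ) (k : ℕ) =>
        beqN k.unpair.2.unpair.2 1 :=
      (primrec_beqN.comp
        (Primrec.snd.comp (Primrec.unpair.comp (Primrec.snd.comp
          (Primrec.unpair.comp Primrec.snd)))) (Primrec.const 1)).to_comp
    exact Computable.option_map hfind hmap
  mono := by
    intro σ τ n b hpre hb
    unfold sideApprox at hb ⊢
    rw [Option.map_eq_some_iff] at hb
    obtain ⟨k, hk, hv⟩ := hb
    rw [findB_some_iff] at hk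
    obtain ⟨hk1, hk2, hk3⟩ := hk
    have hgd : σ.getD (2*k+j) false = true := by
      by_contra hc
      have : σ.getD (2*k+j) false = false := by revert hc; cases σ.getD (2*k+j) false <;> simp
      rw [this] at hk2
      exact Bool.noConfusion hk2
    have hlt : 2*k+j < σ.length := getD_true_lt hgd
    rw [Option.map_eq_some_iff]
    refine ⟨k, findB_some_iff.mpr ⟨hk1.trans_le hpre.length_le, ?_, ?_⟩, hv⟩
    · rw [prefix_getD hpre hlt]
      exact hk2
    · intro j' hj'
      rw [prefix_getD hpre (by omega)]
      exact hk3 j' hj'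

lemma sideF_eval {j : ℕ} {r side : Cantor} (hside : ∀ k, side k = r (2*k+j))
    (hMA : TotalMonotoneApprox side) : (sideF j).eval r = Part.some (eVal side) := by
  apply TuringFunctional.eval_eq_some
  intro n
  obtain ⟨⟨h1, h2, _⟩, htot⟩ := hMA
  have hex : ∃ k, side k = true ∧ k.unpair.1 = n := by
    obtain ⟨s, i, _, hk⟩ := htot n
    exact ⟨tpl n s i, hk, (tpl_unpair n s i).1⟩
  obtain ⟨kmin, hkmin, hmin⟩ :
      ∃ k, (side k = true ∧ k.unpair.1 = n) ∧ ∀ j' < k, ¬(side j' = true ∧ j'.unpair.1 = n) :=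
    ⟨Nat.find hex, Nat.find_spec hex, fun j' hj' => Nat.find_min hex hj'⟩
  set L := 2*kmin + j + 1 with hLdef
  refine ⟨L, ?_⟩
  show sideApprox j (initSeg r L) n = some (eVal side n)
  have hlen : (initSeg r L).length = L := initSeg_length r L
  have hgd : ∀ m < L, (initSeg r L).getD m false = r m := by
    intro m hm
    rw [initSeg_getD, if_pos hm]
  unfold sideApprox
  have hfind : findB
      (fun k => bif (initSeg r L).getD (2*k+j) false then beqN k.unpair.1 n else false)
      (initSeg r L).length = some kmin := by
    rw [findB_some_iff]
    refine ⟨by rw [hlen]; omega, ?_, ?_⟩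
    · rw [hgd _ (by omega), ← hside, hkmin.1]
      show beqN kmin.unpair.1 n = true
      exact beqN_iff.mpr hkmin.2
    · intro j' hj'
      rw [hgd _ (by omega), ← hside]
      cases hs : side j'
      · rfl
      · show beqN j'.unpair.1 n = false
        cases hbq : beqN j'.unpair.1 n
        · rfl
        · exact absurd ⟨hs, beqN_iff.mp hbq⟩ (hmin j' hj')
  rw [hfind]
  show some (beqN kmin.unpair.2.unpair.2 1) = some (eVal side n)
  congr 1
  obtain ⟨n', s', i', hi', hkeq⟩ := h1 kmin hkmin.1
  obtain ⟨hu1, _, hu3⟩ := tpl_unpair n' s' i'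
  have hn' : n' = n := by rw [hkeq] at hkmin; rw [← hkmin.2, hu1]
  have hu3' : kmin.unpair.2.unpair.2 = i' := by rw [hkeq, hu3]
  rw [hu3']
  subst hn'
  rcases (by omega : i' = 0 ∨ i' = 1) with rfl | rfl
  · have : eVal side n' = false := by
      unfold eVal
      rw [decide_eq_false_iff_not]
      rintro ⟨s'', hs''⟩
      have hk1 : side (tpl n' s' 0) = true := hkeq ▸ hkmin.1
      exact absurd (h2 n' s' s'' 0 1 hk1 hs'').2 (by omega)
    rw [this]
    rfl
  · have : eVal side n' = true := by
      unfold eVal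
      rw [decide_eq_true_eq]
      exact ⟨s', hkeq ▸ hkmin.1⟩
    rw [this]
    rfl

end Aux4
section Aux5

lemma primrec_bor : Primrec₂ (· || · : Bool → Bool → Bool) := by
  have := Primrec.cond (Primrec.fst (α := Bool) (β := Bool)) (Primrec.const true) Primrec.snd
  exact this.of_eq fun p => by cases p.1 <;> rfl

lemma primrec_band : Primrec₂ (· && · : Bool → Bool → Bool) := by
  have := Primrec.cond (Primrec.fst (α := Bool) (β := Bool)) Primrec.snd (Primrec.const false)
  exact this.of_eq fun p => by cases p.1 <;> rfl

lemma primrec_bnot : Primrec (! · : Bool → Bool) := by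
  have := Primrec.cond (Primrec.id (α := Bool)) (Primrec.const false) (Primrec.const true)
  exact this.of_eq fun b => by cases b <;> rfl

/-! #### The branching machine -/

def branchApprox (Φf Φg : TuringFunctional) (σ : List Bool) (n : ℕ) : Option Bool :=
  Option.casesOn σ.head? none
    (fun b => bif b then Φf.approx (odds σ) n else Φg.approx (odds σ) n)

lemma prefix_head? {σ τ : List Bool} (h : σ <+: τ) {b : Bool} (hb : σ.head? = some b) :
    τ.head? = some b := by
  obtain ⟨r, rfl⟩ := h
  cases σ with
  | nil => cases hb
  | cons x l => exact hb

def branchF (Φf Φg : TuringFunctional) : TuringFunctional where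
  approx := branchApprox Φf Φg
  computable := by
    have ho : Computable fun p : List Bool × ℕ => p.1.head? :=
      (Primrec.list_head?.comp Primrec.fst).to_comp
    have hof : Computable fun x : (List Bool × ℕ) × Bool => Φf.approx (odds x.1.1) x.1.2 :=
      Φf.computable.comp ((primrec_odds.comp (Primrec.fst.comp Primrec.fst)).to_comp)
        ((Primrec.snd.comp Primrec.fst).to_comp)
    have hog : Computable fun x : (List Bool × ℕ) × Bool => Φg.approx (odds x.1.1) x.1.2 :=
      Φg.computable.comp ((primrec_odds.comp (Primrec.fst.comp Primrec.fst)).to_comp)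
        ((Primrec.snd.comp Primrec.fst).to_comp)
    exact Computable.option_casesOn ho (Computable.const none)
      (Computable.cond Computable.snd hof hog).to₂
  mono := by
    intro σ τ n b hpre hb
    unfold branchApprox at hb ⊢
    cases hh : σ.head? with
    | none => rw [hh] at hb; cases hb
    | some b0 =>
        rw [hh] at hb
        rw [prefix_head? hpre hh]
        have hop := odds_prefix hpre
        cases b0
        · exact Φg.mono _ _ _ _ hop hb
        · exact Φf.mono _ _ _ _ hop hb

lemma initSeg_head? {p : Cantor} {s : ℕ} (h : 0 < s) : (initSeg p s).head? = some (p 0) := by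
  obtain ⟨t, rfl⟩ : ∃ t, s = t + 1 := ⟨s - 1, by omega⟩
  unfold initSeg
  rw [List.range_succ_eq_map]
  rfl

lemma branchF_eval (Φf Φg : TuringFunctional) (p : Cantor) :
    (branchF Φf Φg).eval p = (bif p 0 then Φf else Φg).eval (rightC p) := by
  apply Part.ext
  intro q
  rw [TuringFunctional.mem_eval, TuringFunctional.mem_eval]
  constructor
  · intro h n
    obtain ⟨s, hs⟩ := h n
    rcases Nat.eq_zero_or_pos s with rfl | hpos
    · have hnone : (branchF Φf Φg).approx (initSeg p 0) n = none := rfl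
      rw [hnone] at hs
      cases hs
    · refine ⟨s / 2, ?_⟩
      show (bif p 0 then Φf else Φg).approx (initSeg (rightC p) (s/2)) n = some (q n)
      have hs' : branchApprox Φf Φg (initSeg p s) n = some (q n) := hs
      unfold branchApprox at hs'
      rw [initSeg_head? hpos, odds_initSeg] at hs'
      cases hp0 : p 0 <;> rw [hp0] at hs' <;> exact hs'
  · intro h n
    obtain ⟨s, hs⟩ := h n
    refine ⟨2*s + 1, ?_⟩
    show branchApprox Φf Φg (initSeg p (2*s+1)) n = some (q n)
    unfold branchApprox
    rw [initSeg_head? (by omega), odds_initSeg]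
    have h2 : (2*s+1)/2 = s := by omega
    rw [h2]
    cases hp0 : p 0 <;> rw [hp0] at hs <;> exact hs

/-! #### The monotone-approximation machine -/

def convAt (Ψ : TuringFunctional) (σ : List Bool) (n s : ℕ) : Bool :=
  ballB (fun m => (Ψ.approx (takeL σ s) m).isSome) (n+1)

def convAtR (Ψ : TuringFunctional) (r : Cantor) (n s : ℕ) : Bool :=
  ballB (fun m => (Ψ.approx (initSeg r s) m).isSome) (n+1)

def mseqApprox (Ψ : TuringFunctional) (σ : List Bool) (k : ℕ) : Option Bool :=
  bif bltN k.unpair.2.unpair.1 k.unpair.1 || bleN 2 k.unpair.2.unpair.2 then some false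
  else bif bleN (k.unpair.2.unpair.1 - k.unpair.1) σ.length then
    some (convAt Ψ σ k.unpair.1 (k.unpair.2.unpair.1 - k.unpair.1) &&
      (ballB (fun s' => !convAt Ψ σ k.unpair.1 s') (k.unpair.2.unpair.1 - k.unpair.1) &&
       obeq (Ψ.approx (takeL σ (k.unpair.2.unpair.1 - k.unpair.1)) k.unpair.1)
         (some (beqN k.unpair.2.unpair.2 1))))
  else none

def mseqC (Ψ : TuringFunctional) (r : Cantor) : Cantor := fun k =>
  bif bltN k.unpair.2.unpair.1 k.unpair.1 || bleN 2 k.unpair.2.unpair.2 then false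
  else
    convAtR Ψ r k.unpair.1 (k.unpair.2.unpair.1 - k.unpair.1) &&
      (ballB (fun s' => !convAtR Ψ r k.unpair.1 s') (k.unpair.2.unpair.1 - k.unpair.1) &&
       obeq (Ψ.approx (initSeg r (k.unpair.2.unpair.1 - k.unpair.1)) k.unpair.1)
         (some (beqN k.unpair.2.unpair.2 1)))

lemma convAt_initSeg {Ψ : TuringFunctional} {r : Cantor} {n s L : ℕ} (h : s ≤ L) :
    convAt Ψ (initSeg r L) n s = convAtR Ψ r n s := by
  unfold convAt convAtR
  rw [takeL_eq, initSeg_take r h]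

lemma convAt_prefix {Ψ : TuringFunctional} {σ τ : List Bool} {n s : ℕ} (hpre : σ <+: τ)
    (hs : s ≤ σ.length) : convAt Ψ τ n s = convAt Ψ σ n s := by
  unfold convAt
  rw [takeL_eq, takeL_eq, prefix_take_eq hpre hs]

lemma mseqApprox_initSeg {Ψ : TuringFunctional} {r : Cantor} {k L : ℕ}
    (h : k.unpair.2.unpair.1 - k.unpair.1 ≤ L) :
    mseqApprox Ψ (initSeg r L) k = some (mseqC Ψ r k) := by
  unfold mseqApprox mseqC
  cases hb1 : (bltN k.unpair.2.unpair.1 k.unpair.1 || bleN 2 k.unpair.2.unpair.2)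
  · simp only [cond_false]
    have hlen : bleN (k.unpair.2.unpair.1 - k.unpair.1) (initSeg r L).length = true := by
      rw [initSeg_length]; exact bleN_iff.mpr h
    rw [hlen, cond_true]
    congr 2
    · exact convAt_initSeg h
    · congr 1
      · apply ballB_congr
        intro m hm
        rw [convAt_initSeg (by omega)]
      · rw [takeL_eq, initSeg_take r h]
  · rfl

lemma mseqApprox_mono (Ψ : TuringFunctional) :
    ∀ σ τ k b, σ <+: τ → mseqApprox Ψ σ k = some b → mseqApprox Ψ τ k = some b := by
  intro σ τ k b hpre hb
  unfold mseqApprox at hb ⊢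
  cases hb1 : (bltN k.unpair.2.unpair.1 k.unpair.1 || bleN 2 k.unpair.2.unpair.2)
  · rw [hb1] at hb
    simp only [cond_false] at hb ⊢
    cases hlen : bleN (k.unpair.2.unpair.1 - k.unpair.1) σ.length
    · rw [hlen] at hb
      simp only [cond_false] at hb
      cases hb
    · rw [hlen] at hb
      simp only [cond_true] at hb
      have hsl : k.unpair.2.unpair.1 - k.unpair.1 ≤ σ.length := bleN_iff.mp hlen
      have hlen' : bleN (k.unpair.2.unpair.1 - k.unpair.1) τ.length = true :=
        bleN_iff.mpr (hsl.trans hpre.length_le)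
      rw [hlen', cond_true, ← hb]
      congr 2
      · exact convAt_prefix hpre hsl
      · congr 1
        · apply ballB_congr
          intro m hm
          rw [convAt_prefix hpre (by omega)]
        · rw [takeL_eq, takeL_eq, prefix_take_eq hpre hsl]
  · rw [hb1] at hb
    exact hb


set_option maxHeartbeats 1000000 in
lemma mseqAux_conv (Ψ : TuringFunctional) :
    Computable fun x : (List Bool × ℕ) × ℕ => convAt Ψ x.1.1 x.1.2.unpair.1 x.2 := by
  have hq : Computable₂ fun (x : (List Bool × ℕ) × ℕ) (m : ℕ) =>
      (Ψ.approx (takeL x.1.1 x.2) m).isSome := by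
    have happ : Computable fun y : ((List Bool × ℕ) × ℕ) × ℕ =>
        Ψ.approx (takeL y.1.1.1 y.1.2) y.2 :=
      Ψ.computable.comp
        (primrec_takeL.to_comp.comp
          ((Primrec.fst.comp (Primrec.fst.comp Primrec.fst)).to_comp)
          ((Primrec.snd.comp Primrec.fst).to_comp))
        Computable.snd
    exact (Primrec.option_isSome.to_comp).comp happ
  have hbound : Computable fun x : (List Bool × ℕ) × ℕ => x.1.2.unpair.1 + 1 :=
    (Primrec.succ.comp (Primrec.fst.comp (Primrec.unpair.comp
      (Primrec.snd.comp Primrec.fst)))).to_comp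
  exact computable_ballB hq hbound


set_option maxHeartbeats 1000000 in
lemma mseqAux_mini (Ψ : TuringFunctional) :
    Computable fun a : List Bool × ℕ =>
      ballB (fun s' => !convAt Ψ a.1 a.2.unpair.1 s')
        (a.2.unpair.2.unpair.1 - a.2.unpair.1) := by
  have hs : Primrec fun a : List Bool × ℕ => a.2.unpair.2.unpair.1 - a.2.unpair.1 :=
    Primrec.nat_sub.comp
      (Primrec.fst.comp (Primrec.unpair.comp (Primrec.snd.comp (Primrec.unpair.comp Primrec.snd))))
      (Primrec.fst.comp (Primrec.unpair.comp Primrec.snd))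
  have hq : Computable₂ fun (a : List Bool × ℕ) (s' : ℕ) =>
      !convAt Ψ a.1 a.2.unpair.1 s' :=
    (primrec_bnot.to_comp).comp (mseqAux_conv Ψ)
  exact computable_ballB hq hs.to_comp

set_option maxHeartbeats 1000000 in
lemma mseqAux_val (Ψ : TuringFunctional) :
    Computable fun a : List Bool × ℕ =>
      obeq (Ψ.approx (takeL a.1 (a.2.unpair.2.unpair.1 - a.2.unpair.1)) a.2.unpair.1)
        (some (beqN a.2.unpair.2.unpair.2 1)) := by
  have hn : Primrec fun a : List Bool × ℕ => a.2.unpair.1 :=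
    Primrec.fst.comp (Primrec.unpair.comp Primrec.snd)
  have hi : Primrec fun a : List Bool × ℕ => a.2.unpair.2.unpair.2 :=
    Primrec.snd.comp (Primrec.unpair.comp (Primrec.snd.comp (Primrec.unpair.comp Primrec.snd)))
  have hs : Primrec fun a : List Bool × ℕ => a.2.unpair.2.unpair.1 - a.2.unpair.1 :=
    Primrec.nat_sub.comp
      (Primrec.fst.comp (Primrec.unpair.comp (Primrec.snd.comp (Primrec.unpair.comp Primrec.snd))))
      (Primrec.fst.comp (Primrec.unpair.comp Primrec.snd))
  have h1 : Computable fun a : List Bool × ℕ =>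
      Ψ.approx (takeL a.1 (a.2.unpair.2.unpair.1 - a.2.unpair.1)) a.2.unpair.1 :=
    Ψ.computable.comp (primrec_takeL.to_comp.comp (Computable.fst) hs.to_comp) hn.to_comp
  have h2 : Primrec fun a : List Bool × ℕ => (some (beqN a.2.unpair.2.unpair.2 1) : Option Bool) :=
    Primrec.option_some.comp (primrec_beqN.comp hi (Primrec.const 1))
  exact primrec_obeq.to_comp.comp h1 h2.to_comp

set_option maxHeartbeats 1000000 in
lemma mseqAux_conv1 (Ψ : TuringFunctional) :
    Computable fun a : List Bool × ℕ =>
      convAt Ψ a.1 a.2.unpair.1 (a.2.unpair.2.unpair.1 - a.2.unpair.1) := by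
  have hs : Primrec fun a : List Bool × ℕ => a.2.unpair.2.unpair.1 - a.2.unpair.1 :=
    Primrec.nat_sub.comp
      (Primrec.fst.comp (Primrec.unpair.comp (Primrec.snd.comp (Primrec.unpair.comp Primrec.snd))))
      (Primrec.fst.comp (Primrec.unpair.comp Primrec.snd))
  have hg : Computable fun a : List Bool × ℕ =>
      ((a, a.2.unpair.2.unpair.1 - a.2.unpair.1) : (List Bool × ℕ) × ℕ) :=
    Computable.id.pair hs.to_comp
  have h2 := (mseqAux_conv Ψ).comp hg
  exact h2.of_eq fun a => rfl



set_option maxHeartbeats 1000000 in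
lemma computable_mseqApprox (Ψ : TuringFunctional) : Computable₂ (mseqApprox Ψ) := by
  have hn : Primrec fun a : List Bool × ℕ => a.2.unpair.1 :=
    Primrec.fst.comp (Primrec.unpair.comp Primrec.snd)
  have ht : Primrec fun a : List Bool × ℕ => a.2.unpair.2.unpair.1 :=
    Primrec.fst.comp (Primrec.unpair.comp (Primrec.snd.comp (Primrec.unpair.comp Primrec.snd)))
  have hi : Primrec fun a : List Bool × ℕ => a.2.unpair.2.unpair.2 :=
    Primrec.snd.comp (Primrec.unpair.comp (Primrec.snd.comp (Primrec.unpair.comp Primrec.snd)))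
  have hs : Primrec fun a : List Bool × ℕ => a.2.unpair.2.unpair.1 - a.2.unpair.1 :=
    Primrec.nat_sub.comp ht hn
  have hguard : Primrec fun a : List Bool × ℕ =>
      (bltN a.2.unpair.2.unpair.1 a.2.unpair.1 || bleN 2 a.2.unpair.2.unpair.2) :=
    primrec_bor.comp (primrec_bltN.comp ht hn) (primrec_bleN.comp (Primrec.const 2) hi)
  have hlen : Primrec fun a : List Bool × ℕ =>
      bleN (a.2.unpair.2.unpair.1 - a.2.unpair.1) a.1.length :=
    primrec_bleN.comp hs (Primrec.list_length.comp Primrec.fst)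
  have hbody : Computable fun a : List Bool × ℕ =>
      (some (convAt Ψ a.1 a.2.unpair.1 (a.2.unpair.2.unpair.1 - a.2.unpair.1) &&
        (ballB (fun s' => !convAt Ψ a.1 a.2.unpair.1 s')
            (a.2.unpair.2.unpair.1 - a.2.unpair.1) &&
         obeq (Ψ.approx (takeL a.1 (a.2.unpair.2.unpair.1 - a.2.unpair.1)) a.2.unpair.1)
           (some (beqN a.2.unpair.2.unpair.2 1)))) : Option Bool) :=
    Computable.option_some.comp
      (primrec_band.to_comp.comp (mseqAux_conv1 Ψ)
        (primrec_band.to_comp.comp (mseqAux_mini Ψ) (mseqAux_val Ψ)))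
  have hfinal := Computable.cond hguard.to_comp
    (Computable.const (some false : Option Bool))
    (Computable.cond hlen.to_comp hbody (Computable.const (none : Option Bool)))
  exact hfinal.of_eq fun a => rfl


def mseqF (Ψ : TuringFunctional) : TuringFunctional where
  approx := mseqApprox Ψ
  computable := computable_mseqApprox Ψ
  mono := mseqApprox_mono Ψ

end Aux5
section Aux6

@[simp] lemma beqN_false_iff {a b : ℕ} : beqN a b = false ↔ ¬ a = b := by simp [beqN]
@[simp] lemma bleN_false_iff {a b : ℕ} : bleN a b = false ↔ ¬ a ≤ b := by simp [bleN]
@[simp] lemma bltN_false_iff {a b : ℕ} : bltN a b = false ↔ ¬ a < b := by simp [bltN]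

lemma k_eq_tpl (k : ℕ) : tpl k.unpair.1 k.unpair.2.unpair.1 k.unpair.2.unpair.2 = k := by
  unfold tpl
  rw [Nat.pair_unpair, Nat.pair_unpair]

lemma convAtR_iff {Ψ : TuringFunctional} {r : Cantor} {n s : ℕ} :
    convAtR Ψ r n s = true ↔ ∀ m ≤ n, (Ψ.approx (initSeg r s) m).isSome = true := by
  unfold convAtR
  rw [ballB_iff]
  exact ⟨fun h m hm => h m (by omega), fun h m hm => h m (by omega)⟩

lemma isSome_stage_mono {Ψ : TuringFunctional} {r : Cantor} {s t m : ℕ} (hst : s ≤ t)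
    (h : (Ψ.approx (initSeg r s) m).isSome = true) :
    (Ψ.approx (initSeg r t) m).isSome = true := by
  obtain ⟨b, hb⟩ := Option.isSome_iff_exists.mp h
  rw [Ψ.mono _ _ _ _ (initSeg_prefix r hst) hb]
  rfl

lemma convAtR_stage_mono {Ψ : TuringFunctional} {r : Cantor} {n s t : ℕ} (hst : s ≤ t)
    (h : convAtR Ψ r n s = true) : convAtR Ψ r n t = true :=
  convAtR_iff.mpr fun m hm => isSome_stage_mono hst (convAtR_iff.mp h m hm)

lemma convAtR_n_mono {Ψ : TuringFunctional} {r : Cantor} {m n s : ℕ} (hmn : m ≤ n)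
    (h : convAtR Ψ r n s = true) : convAtR Ψ r m s = true :=
  convAtR_iff.mpr fun m' hm' => convAtR_iff.mp h m' (hm'.trans hmn)

lemma toNat_beqN (b : Bool) : beqN (Bool.toNat b) 1 = b := by
  cases b
  · show beqN 0 1 = false
    rw [beqN_false_iff]; omega
  · show beqN 1 1 = true
    rw [beqN_iff]

lemma mseqC_true_iff {Ψ : TuringFunctional} {r : Cantor} {k : ℕ} :
    mseqC Ψ r k = true ↔
    ∃ n s b, k = tpl n (s+n) (Bool.toNat b) ∧ convAtR Ψ r n s = true ∧
      (∀ s' < s, convAtR Ψ r n s' = false) ∧ Ψ.approx (initSeg r s) n = some b := by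
  constructor
  · intro h
    unfold mseqC at h
    cases hb1 : (bltN k.unpair.2.unpair.1 k.unpair.1 || bleN 2 k.unpair.2.unpair.2)
    case true => rw [hb1] at h; exact absurd h (by simp)
    case false =>
      rw [hb1] at h
      simp only [cond_false, Bool.and_eq_true] at h
      obtain ⟨h1, h2, h3⟩ := h
      have hg1 : ¬ k.unpair.2.unpair.1 < k.unpair.1 :=
        bltN_false_iff.mp (Bool.or_eq_false_iff.mp hb1).1
      have hg2 : k.unpair.2.unpair.2 < 2 := by
        have := bleN_false_iff.mp (Bool.or_eq_false_iff.mp hb1).2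
        omega
      set n := k.unpair.1
      set t := k.unpair.2.unpair.1
      set i := k.unpair.2.unpair.2
      refine ⟨n, t - n, beqN i 1, ?_, h1, ?_, obeq_iff.mp h3⟩
      · have h4 : (beqN i 1).toNat = i := by
          rcases (by omega : i = 0 ∨ i = 1) with hi | hi
          · rw [hi]
            have : beqN 0 1 = false := by rw [beqN_false_iff]; omega
            rw [this]; rfl
          · rw [hi, beqN_iff.mpr rfl]; rfl
        rw [h4, Nat.sub_add_cancel (by omega)]
        exact (k_eq_tpl k).symm
      · intro s' hs'
        have := ballB_iff.mp h2 s' hs'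
        revert this
        cases convAtR Ψ r n s' <;> simp
  · rintro ⟨n, s, b, rfl, h1, h2, h3⟩
    unfold mseqC
    obtain ⟨hu1, hu2, hu3⟩ := tpl_unpair n (s+n) (Bool.toNat b)
    rw [hu1, hu2, hu3]
    have hblt : bltN (s+n) n = false := by rw [bltN_false_iff]; omega
    have hble : bleN 2 (Bool.toNat b) = false := by
      rw [bleN_false_iff]
      have := toNat_lt_two b
      omega
    rw [hblt, hble]
    show (convAtR Ψ r n (s + n - n) && _) = true
    have hsub : s + n - n = s := by omega
    rw [hsub, h1, h3]
    have hball : ballB (fun s' => !convAtR Ψ r n s') s = true :=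
      ballB_iff.mpr fun m hm => by rw [h2 m hm]; rfl
    rw [hball, toNat_beqN, obeq_iff.mpr rfl]
    rfl

lemma mseqC_MA (Ψ : TuringFunctional) (r : Cantor) : MonotoneApprox (mseqC Ψ r) := by
  refine ⟨?_, ?_, ?_⟩
  · intro k hk
    obtain ⟨n, s, b, rfl, -, -, -⟩ := mseqC_true_iff.mp hk
    exact ⟨n, s+n, b.toNat, toNat_lt_two b, rfl⟩
  · intro n s t i j h1 h2
    obtain ⟨n1, s1, b1, he1, hc1, hm1, ha1⟩ := mseqC_true_iff.mp h1
    obtain ⟨n2, s2, b2, he2, hc2, hm2, ha2⟩ := mseqC_true_iff.mp h2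
    obtain ⟨e1, e2, e3⟩ := tpl_inj he1
    obtain ⟨f1, f2, f3⟩ := tpl_inj he2
    have hn : n2 = n1 := by omega
    subst hn
    subst e1
    have hs12 : s1 = s2 := by
      rcases lt_trichotomy s1 s2 with hlt | heq | hgt
      · rw [hm2 s1 hlt] at hc1; exact Bool.noConfusion hc1
      · exact heq
      · rw [hm1 s2 hgt] at hc2; exact Bool.noConfusion hc2
    subst hs12
    have hb : b1 = b2 := Ψ.approx_agree ha1 ha2
    constructor
    · omega
    · rw [e3, f3, hb]
  · intro m n s t i j h1 h2 hmn
    obtain ⟨n1, s1, b1, he1, hc1, hm1, ha1⟩ := mseqC_true_iff.mp h1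
    obtain ⟨n2, s2, b2, he2, hc2, hm2, ha2⟩ := mseqC_true_iff.mp h2
    obtain ⟨e1, e2, e3⟩ := tpl_inj he1
    obtain ⟨f1, f2, f3⟩ := tpl_inj he2
    subst e1
    subst f1
    have hc2' : convAtR Ψ r m s2 = true := convAtR_n_mono (by omega) hc2
    have hle : ¬ s2 < s1 := fun hh => by rw [hm1 s2 hh] at hc2'; exact Bool.noConfusion hc2'
    omega

lemma mseqC_total {Ψ : TuringFunctional} {r q : Cantor}
    (h : ∀ n, ∃ s, Ψ.approx (initSeg r s) n = some (q n)) :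
    TotalMonotoneApprox (mseqC Ψ r) ∧ eVal (mseqC Ψ r) = q := by
  have hconv : ∀ n, ∃ s, convAtR Ψ r n s = true := by
    intro n
    induction n with
    | zero =>
        obtain ⟨s, hs⟩ := h 0
        refine ⟨s, convAtR_iff.mpr fun m hm => ?_⟩
        have hm0 : m = 0 := by omega
        rw [hm0, hs]
        rfl
    | succ n ih =>
        obtain ⟨S, hS⟩ := ih
        obtain ⟨s', hs'⟩ := h (n+1)
        refine ⟨max S s', convAtR_iff.mpr fun m hm => ?_⟩
        rcases (by omega : m ≤ n ∨ m = n+1) with hle | rfl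
        · exact isSome_stage_mono (le_max_left S s') (convAtR_iff.mp hS m hle)
        · exact isSome_stage_mono (le_max_right S s') (by rw [hs']; rfl)
  have hentry : ∀ n, ∃ s b, (∀ s' < s, convAtR Ψ r n s' = false) ∧ convAtR Ψ r n s = true ∧
      Ψ.approx (initSeg r s) n = some b ∧ mseqC Ψ r (tpl n (s+n) b.toNat) = true ∧ b = q n := by
    intro n
    have hfind := Nat.find_spec (hconv n)
    have hmin : ∀ s' < Nat.find (hconv n), convAtR Ψ r n s' = false := by
      intro s' hs'
      have := Nat.find_min (hconv n) hs'
      revert this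
      cases convAtR Ψ r n s' <;> simp
    set s0 := Nat.find (hconv n) with hs0def
    have hsome : (Ψ.approx (initSeg r s0) n).isSome = true := convAtR_iff.mp hfind n le_rfl
    obtain ⟨b, hb⟩ := Option.isSome_iff_exists.mp hsome
    obtain ⟨s1, hs1⟩ := h n
    have hbq : b = q n := Ψ.approx_agree hb hs1
    exact ⟨s0, b, hmin, hfind, hb, mseqC_true_iff.mpr ⟨n, s0, b, rfl, hfind, hmin, hb⟩, hbq⟩
  constructor
  · refine ⟨mseqC_MA Ψ r, fun n => ?_⟩
    obtain ⟨s, b, -, -, -, hmem, -⟩ := hentry n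
    exact ⟨s+n, b.toNat, toNat_lt_two b, hmem⟩
  · funext n
    obtain ⟨s, b, hmin, hs0, hb, hmem, hbq⟩ := hentry n
    show decide (∃ t, mseqC Ψ r (tpl n t 1) = true) = q n
    cases hq : q n
    · rw [decide_eq_false_iff_not]
      rintro ⟨t, ht⟩
      obtain ⟨n2, s2, b2, he2, hc2, hm2, ha2⟩ := mseqC_true_iff.mp ht
      obtain ⟨g1, g2, g3⟩ := tpl_inj he2
      subst g1
      have hb2 : b2 = true := by
        cases b2
        · exfalso; simp [Bool.toNat] at g3
        · rfl
      rw [hb2] at ha2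
      have htb := Ψ.approx_agree ha2 hb
      exact absurd (htb.trans (hbq.trans hq)) (by simp)
    · rw [decide_eq_true_eq]
      refine ⟨s + n, ?_⟩
      have hb1 : Bool.toNat b = 1 := by rw [hbq, hq]; rfl
      rw [← hb1]
      exact hmem

end Aux6
section Aux7

def joinApprox (Ψf Ψg : TuringFunctional) (σ : List Bool) (n : ℕ) : Option Bool :=
  bif beqN (n % 2) 0 then mseqApprox Ψf σ (n/2) else mseqApprox Ψg σ (n/2)

def joinF (Ψf Ψg : TuringFunctional) : TuringFunctional where
  approx := joinApprox Ψf Ψg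
  computable := by
    have hdiv : Computable fun p : List Bool × ℕ => p.2 / 2 :=
      (Primrec.nat_div.comp Primrec.snd (Primrec.const 2)).to_comp
    have h1 : Computable fun p : List Bool × ℕ => mseqApprox Ψf p.1 (p.2/2) :=
      (computable_mseqApprox Ψf).comp Computable.fst hdiv
    have h2 : Computable fun p : List Bool × ℕ => mseqApprox Ψg p.1 (p.2/2) :=
      (computable_mseqApprox Ψg).comp Computable.fst hdiv
    have hc : Computable fun p : List Bool × ℕ => beqN (p.2 % 2) 0 :=
      (primrec_beqN.comp (Primrec.nat_mod.comp Primrec.snd (Primrec.const 2))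
        (Primrec.const 0)).to_comp
    exact Computable.cond hc h1 h2
  mono := by
    intro σ τ n b hpre hb
    unfold joinApprox at hb ⊢
    cases hc : beqN (n % 2) 0
    · rw [hc] at hb
      simp only [cond_false] at hb ⊢
      exact mseqApprox_mono Ψg _ _ _ _ hpre hb
    · rw [hc] at hb
      simp only [cond_true] at hb ⊢
      exact mseqApprox_mono Ψf _ _ _ _ hpre hb

lemma joinF_eval (Ψf Ψg : TuringFunctional) (r : Cantor) :
    (joinF Ψf Ψg).eval r = Part.some (pairC (mseqC Ψf r) (mseqC Ψg r)) := by
  apply TuringFunctional.eval_eq_some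
  intro n
  refine ⟨(n/2).unpair.2.unpair.1, ?_⟩
  show joinApprox Ψf Ψg (initSeg r ((n/2).unpair.2.unpair.1)) n
    = some (pairC (mseqC Ψf r) (mseqC Ψg r) n)
  unfold joinApprox pairC
  have hL : (n/2).unpair.2.unpair.1 - (n/2).unpair.1 ≤ (n/2).unpair.2.unpair.1 := by omega
  cases hc : beqN (n % 2) 0
  · rw [if_neg (beqN_false_iff.mp hc), cond_false]
    exact mseqApprox_initSeg hL
  · rw [if_pos (beqN_iff.mp hc), cond_true]
    exact mseqApprox_initSeg hL

/-! #### Representation lemmas -/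

lemma hat_delta (A : RepSp) (a : Cantor) :
    (A.hat).δ a = Part.some (((evalMA a).bind A.δ).toOption) := rfl

lemma hat_toOption_eq_some {A : RepSp} {a : Cantor} {y : A.X}
    (hMA : TotalMonotoneApprox a) (hy : y ∈ A.δ (eVal a)) :
    ((evalMA a).bind A.δ).toOption = some y := by
  rw [Part.toOption_eq_some_iff]
  exact Part.mem_bind_iff.mpr ⟨eVal a, ⟨hMA, rfl⟩, hy⟩

lemma prod_hat_delta (A B : RepSp) (a c : Cantor) :
    ((A.hat).prod (B.hat)).δ (pairC a c) =
      Part.some (((evalMA a).bind A.δ).toOption, ((evalMA c).bind B.δ).toOption) := by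
  show ((A.hat).δ (leftC (pairC a c))).bind
      (fun x => ((B.hat).δ (rightC (pairC a c))).map fun y => (x, y)) = _
  rw [leftC_pairC, rightC_pairC, hat_delta, hat_delta]
  exact (Part.bind_some _ _).trans (Part.map_some _ _)

end Aux7
section Main

lemma sum_delta (A B : RepSp) (r : Cantor) :
    (A.sum B).δ r = if leftC r = natSet 0 then (A.δ (rightC r)).map Sum.inl
      else if leftC r = natSet 1 then (B.δ (rightC r)).map Sum.inr else Part.none := rfl

lemma prod_hat_delta' (A B : RepSp) (r : Cantor) :
    ((A.hat).prod (B.hat)).δ r =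
      Part.some (((evalMA (leftC r)).bind A.δ).toOption,
        ((evalMA (rightC r)).bind B.δ).toOption) := by
  show ((A.hat).δ (leftC r)).bind
      (fun x => ((B.hat).δ (rightC r)).map fun y => (x, y)) = _
  rw [hat_delta, hat_delta]; exact (Part.bind_some _ _).trans (Part.map_some _ _)

lemma le_boxplus_left (f g : MFn) : sWLe f (f.boxplus g) := by
  refine ⟨embF 0, sideF 0, ?_⟩
  intro G hG p x hx hne
  have hmem : (Sum.inl x : f.A.X ⊕ g.A.X) ∈ (f.A.sum g.A).δ (inC 0 p) := by
    have h0 : leftC (inC 0 p) = natSet 0 := leftC_pairC _ _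
    have h1 : rightC (inC 0 p) = p := rightC_pairC _ _
    rw [sum_delta, h0, h1, if_pos rfl]
    exact Part.mem_map _ hx
  have hne' : ((f.boxplus g).f (Sum.inl x)).Nonempty := by
    obtain ⟨y, hy⟩ := hne
    exact ⟨(some y, none), Set.mem_prod.mpr ⟨⟨y, hy, rfl⟩, trivial⟩⟩
  obtain ⟨r, hr, ypair, hyδ, hyf⟩ := hG (inC 0 p) (Sum.inl x) hmem hne'
  have hδ : ypair ∈ ((f.B.hat).prod (g.B.hat)).δ r := hyδ
  rw [prod_hat_delta'] at hδ; replace hδ := Part.mem_some_iff.mp hδ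
  have hyf' : ypair ∈ (Option.some '' f.f x) ×ˢ (Set.univ : Set (Option g.B.X)) := hyf
  obtain ⟨y, hyfx, hysome⟩ := (Set.mem_prod.mp hyf').1
  have htoOpt : ((evalMA (leftC r)).bind f.B.δ).toOption = some y := by
    rw [hδ] at hysome
    exact hysome.symm
  have hmem2 := Part.toOption_eq_some_iff.mp htoOpt
  replace hmem2 := Part.mem_bind_iff.mp hmem2
  obtain ⟨c, hc, hyc⟩ := hmem2
  obtain ⟨hMA, hcv⟩ := hc
  have hcv' : eVal (leftC r) = c := hcv
  have hside : (sideF 0).eval r = Part.some (eVal (leftC r)) := by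
    refine sideF_eval (fun k => ?_) hMA
    show r (2*k) = r (2*k+0)
    congr 1
  refine ⟨eVal (leftC r), ?_, y, ?_, hyfx⟩
  · refine Part.mem_bind_iff.mpr ⟨r, Part.mem_bind_iff.mpr ⟨inC 0 p, ?_, hr⟩, ?_⟩
    · rw [embF_eval]; exact Part.mem_some _
    · rw [hside]; exact Part.mem_some _
  · rw [hcv']
    exact hyc

lemma le_boxplus_right (f g : MFn) : sWLe g (f.boxplus g) := by
  refine ⟨embF 1, sideF 1, ?_⟩
  intro G hG p x hx hne
  have hmem : (Sum.inr x : f.A.X ⊕ g.A.X) ∈ (f.A.sum g.A).δ (inC 1 p) := by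
    have h0 : leftC (inC 1 p) = natSet 1 := leftC_pairC _ _
    have h1 : rightC (inC 1 p) = p := rightC_pairC _ _
    have hne10 : natSet 1 ≠ natSet 0 := by
      intro h
      have := congrFun h 0
      simp [natSet] at this
    rw [sum_delta, h0, h1, if_neg hne10, if_pos rfl]
    exact Part.mem_map _ hx
  have hne' : ((f.boxplus g).f (Sum.inr x)).Nonempty := by
    obtain ⟨y, hy⟩ := hne
    exact ⟨(none, some y), Set.mem_prod.mpr ⟨trivial, ⟨y, hy, rfl⟩⟩⟩
  obtain ⟨r, hr, ypair, hyδ, hyf⟩ := hG (inC 1 p) (Sum.inr x) hmem hne'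
  have hδ : ypair ∈ ((f.B.hat).prod (g.B.hat)).δ r := hyδ
  rw [prod_hat_delta'] at hδ; replace hδ := Part.mem_some_iff.mp hδ
  have hyf' : ypair ∈ (Set.univ : Set (Option f.B.X)) ×ˢ (Option.some '' g.f x) := hyf
  obtain ⟨y, hyfx, hysome⟩ := (Set.mem_prod.mp hyf').2
  have htoOpt : ((evalMA (rightC r)).bind g.B.δ).toOption = some y := by
    rw [hδ] at hysome
    exact hysome.symm
  have hmem2 := Part.toOption_eq_some_iff.mp htoOpt
  replace hmem2 := Part.mem_bind_iff.mp hmem2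
  obtain ⟨c, hc, hyc⟩ := hmem2
  obtain ⟨hMA, hcv⟩ := hc
  have hcv' : eVal (rightC r) = c := hcv
  have hside : (sideF 1).eval r = Part.some (eVal (rightC r)) := by
    refine sideF_eval (fun k => ?_) hMA
    rfl
  refine ⟨eVal (rightC r), ?_, y, ?_, hyfx⟩
  · refine Part.mem_bind_iff.mpr ⟨r, Part.mem_bind_iff.mpr ⟨inC 1 p, ?_, hr⟩, ?_⟩
    · rw [embF_eval]; exact Part.mem_some _
    · rw [hside]; exact Part.mem_some _
  · rw [hcv']
    exact hyc

lemma boxplus_le (f g h : MFn) (hf : sWLe f h) (hg : sWLe g h) : sWLe (f.boxplus g) h := by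
  obtain ⟨Φf, Ψf, Hf⟩ := hf
  obtain ⟨Φg, Ψg, Hg⟩ := hg
  refine ⟨branchF Φf Φg, joinF Ψf Ψg, ?_⟩
  intro G hG p x' hx' hne
  cases x' with
  | inl x =>
      have hx'' : Sum.inl x ∈ (f.A.sum g.A).δ p := hx'
      have hcase : leftC p = natSet 0 ∧ x ∈ f.A.δ (rightC p) := by
        rw [sum_delta] at hx''
        by_cases h0 : leftC p = natSet 0
        · rw [if_pos h0] at hx''; replace hx'' := (Part.mem_map_iff _).mp hx''
          obtain ⟨a, ha, hax⟩ := hx''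
          have : a = x := Sum.inl.inj hax
          subst this
          exact ⟨h0, ha⟩
        · rw [if_neg h0] at hx''
          by_cases h1 : leftC p = natSet 1
          · rw [if_pos h1] at hx''; replace hx'' := (Part.mem_map_iff _).mp hx''
            obtain ⟨a, -, hax⟩ := hx''
            exact absurd hax (by simp)
          · rw [if_neg h1] at hx''
            exact absurd hx'' (Part.notMem_none _)
      obtain ⟨h0, hxr⟩ := hcase
      have hp0 : p 0 = true := by
        have hc := congrFun h0 0
        have : p 0 = natSet 0 0 := hc
        rw [this]
        simp [natSet]
      have hnef : (f.f x).Nonempty := by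
        obtain ⟨yp, hyp⟩ := hne
        have hyp' : yp ∈ (Option.some '' f.f x) ×ˢ (Set.univ : Set (Option g.B.X)) := hyp
        obtain ⟨y, hy, -⟩ := (Set.mem_prod.mp hyp').1
        exact ⟨y, hy⟩
      obtain ⟨q', hq', y, hyδ, hyfx⟩ := Hf G hG (rightC p) x hxr hnef
      obtain ⟨r, hrin, hq'r⟩ := Part.mem_bind_iff.mp hq'
      obtain ⟨u, hu, hru⟩ := Part.mem_bind_iff.mp hrin
      have hΦ : u ∈ (branchF Φf Φg).eval p := by
        rw [branchF_eval, hp0]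
        exact hu
      have hchar : ∀ n, ∃ s, Ψf.approx (initSeg r s) n = some (q' n) :=
        TuringFunctional.mem_eval.mp hq'r
      obtain ⟨hTMA, hEval⟩ := mseqC_total hchar
      refine ⟨pairC (mseqC Ψf r) (mseqC Ψg r), ?_,
        (some y, ((evalMA (mseqC Ψg r)).bind g.B.δ).toOption), ?_, ?_⟩
      · refine Part.mem_bind_iff.mpr ⟨r, Part.mem_bind_iff.mpr ⟨u, hΦ, hru⟩, ?_⟩
        rw [joinF_eval]
        exact Part.mem_some _
      · show _ ∈ ((f.B.hat).prod (g.B.hat)).δ _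
        rw [prod_hat_delta', leftC_pairC, rightC_pairC]; refine Part.mem_some_iff.mpr ?_
        have : ((evalMA (mseqC Ψf r)).bind f.B.δ).toOption = some y :=
          hat_toOption_eq_some hTMA (by rw [hEval]; exact hyδ)
        rw [this]; rfl
      · exact Set.mem_prod.mpr ⟨⟨y, hyfx, rfl⟩, trivial⟩
  | inr x =>
      have hx'' : Sum.inr x ∈ (f.A.sum g.A).δ p := hx'
      have hcase : leftC p = natSet 1 ∧ x ∈ g.A.δ (rightC p) := by
        rw [sum_delta] at hx''
        by_cases h0 : leftC p = natSet 0
        · rw [if_pos h0] at hx''; replace hx'' := (Part.mem_map_iff _).mp hx''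
          obtain ⟨a, -, hax⟩ := hx''
          exact absurd hax (by simp)
        · rw [if_neg h0] at hx''
          by_cases h1 : leftC p = natSet 1
          · rw [if_pos h1] at hx''; replace hx'' := (Part.mem_map_iff _).mp hx''
            obtain ⟨a, ha, hax⟩ := hx''
            have : a = x := Sum.inr.inj hax
            subst this
            exact ⟨h1, ha⟩
          · rw [if_neg h1] at hx''
            exact absurd hx'' (Part.notMem_none _)
      obtain ⟨h1, hxr⟩ := hcase
      have hp0 : p 0 = false := by
        have hc := congrFun h1 0
        have : p 0 = natSet 1 0 := hc
        rw [this]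
        simp [natSet]
      have hneg : (g.f x).Nonempty := by
        obtain ⟨yp, hyp⟩ := hne
        have hyp' : yp ∈ (Set.univ : Set (Option f.B.X)) ×ˢ (Option.some '' g.f x) := hyp
        obtain ⟨y, hy, -⟩ := (Set.mem_prod.mp hyp').2
        exact ⟨y, hy⟩
      obtain ⟨q', hq', y, hyδ, hyfx⟩ := Hg G hG (rightC p) x hxr hneg
      obtain ⟨r, hrin, hq'r⟩ := Part.mem_bind_iff.mp hq'
      obtain ⟨u, hu, hru⟩ := Part.mem_bind_iff.mp hrin
      have hΦ : u ∈ (branchF Φf Φg).eval p := by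
        rw [branchF_eval, hp0]
        exact hu
      have hchar : ∀ n, ∃ s, Ψg.approx (initSeg r s) n = some (q' n) :=
        TuringFunctional.mem_eval.mp hq'r
      obtain ⟨hTMA, hEval⟩ := mseqC_total hchar
      refine ⟨pairC (mseqC Ψf r) (mseqC Ψg r), ?_,
        (((evalMA (mseqC Ψf r)).bind f.B.δ).toOption, some y), ?_, ?_⟩
      · refine Part.mem_bind_iff.mpr ⟨r, Part.mem_bind_iff.mpr ⟨u, hΦ, hru⟩, ?_⟩
        rw [joinF_eval]
        exact Part.mem_some _
      · show _ ∈ ((f.B.hat).prod (g.B.hat)).δ _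
        rw [prod_hat_delta', leftC_pairC, rightC_pairC]; refine Part.mem_some_iff.mpr ?_
        have : ((evalMA (mseqC Ψg r)).bind g.B.δ).toOption = some y :=
          hat_toOption_eq_some hTMA (by rw [hEval]; exact hyδ)
        rw [this]; rfl
      · exact Set.mem_prod.mpr ⟨trivial, ⟨y, hyfx, rfl⟩⟩

end Main

/-- Theorem 3.7: `f ⊞ g` is the supremum of `f` and `g` under `≤_sW`. -/
theorem stmt5 : ∀ f g : MFn,
    sWLe f (f.boxplus g) ∧ sWLe g (f.boxplus g) ∧
    ∀ h : MFn, sWLe f h → sWLe g h → sWLe (f.boxplus g) h := by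
  intro f g
  exact ⟨le_boxplus_left f g, le_boxplus_right f g, fun h hf hg => boxplus_le f g h hf hg⟩

end

end StrongWeihrauch
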